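/- Let K and L be convex bodies in ℝⁿ containing the origin in their interiors. Then the following are equivalent: (i) for every unit vector ξ, {ρ_K(ξ), ρ_K(−ξ)} = {ρ_L(ξ), ρ_L(−ξ)} as unordered pairs; (ii) for every unit vector ξ, {h_K(ξ), h_K(−ξ)} = {h_L(ξ), h_L(−ξ)} as unordered pairs. -/

import Mathlib

open Set

/-- The radial function of a body `K`: `ρ_K(ξ) = sup {r > 0 : r • ξ ∈ K}`. -/
noncomputable def radial {n : ℕ} (K : Set (EuclideanSpace ℝ (Fin n)))
    (ξ : EuclideanSpace ℝ (Fin n)) : ℝ :=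
  sSup {r : ℝ | 0 < r ∧ r • ξ ∈ K}

/-- The support function of `K`: `h_K(x) = sup {⟨x, y⟩ : y ∈ K}`. -/
noncomputable def supp {n : ℕ} (K : Set (EuclideanSpace ℝ (Fin n)))
    (x : EuclideanSpace ℝ (Fin n)) : ℝ :=
  sSup ((fun y => (inner ℝ x y : ℝ)) '' K)

namespace RadialSupportAux

open RealInnerProductSpace

variable {n : ℕ}

local notation "E" => EuclideanSpace ℝ (Fin n)

/-! ### Elementary real pair lemmas -/

lemma pair_cases {a b c d : ℝ} (h : ({a, b} : Set ℝ) = {c, d}) :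
    (a = c ∧ b = d) ∨ (a = d ∧ b = c) := Set.pair_eq_pair_iff.1 h

lemma minmax_of_pair {a b c d : ℝ} (h : ({a, b} : Set ℝ) = {c, d}) :
    min a b = min c d ∧ max a b = max c d := by
  rcases pair_cases h with ⟨h1, h2⟩ | ⟨h1, h2⟩ <;> subst h1 <;> subst h2
  · exact ⟨rfl, rfl⟩
  · exact ⟨min_comm _ _, max_comm _ _⟩

lemma pair_of_minmax {a b c d : ℝ} (h1 : min a b = min c d) (h2 : max a b = max c d) :
    ({a, b} : Set ℝ) = {c, d} := by
  rcases le_total a b with hab | hab <;> rcases le_total c d with hcd | hcd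
  · rw [min_eq_left hab, min_eq_left hcd] at h1
    rw [max_eq_right hab, max_eq_right hcd] at h2
    exact Set.pair_eq_pair_iff.2 (Or.inl ⟨h1, h2⟩)
  · rw [min_eq_left hab, min_eq_right hcd] at h1
    rw [max_eq_right hab, max_eq_left hcd] at h2
    exact Set.pair_eq_pair_iff.2 (Or.inr ⟨h1, h2⟩)
  · rw [min_eq_right hab, min_eq_left hcd] at h1
    rw [max_eq_left hab, max_eq_right hcd] at h2
    exact Set.pair_eq_pair_iff.2 (Or.inr ⟨h2, h1⟩)
  · rw [min_eq_right hab, min_eq_right hcd] at h1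
    rw [max_eq_left hab, max_eq_left hcd] at h2
    exact Set.pair_eq_pair_iff.2 (Or.inl ⟨h2, h1⟩)

lemma combo_lt {t a1 a2 b1 b2 : ℝ} (ht0 : 0 ≤ t) (ht1 : t ≤ 1)
    (h1 : a1 < b1) (h2 : a2 < b2) :
    (1 - t) * a1 + t * a2 < (1 - t) * b1 + t * b2 := by
  rcases lt_or_eq_of_le ht0 with h | h
  · have hA : t * a2 < t * b2 := by nlinarith
    have hB : (1 - t) * a1 ≤ (1 - t) * b1 := by nlinarith
    linarith
  · rw [← h]; ring_nf; nlinarith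

lemma combo_lt' {α β a b c : ℝ} (hα : 0 ≤ α) (hβ : 0 ≤ β) (hs : α + β = 1)
    (h1 : c < a) (h2 : c < b) : c < α * a + β * b := by
  rcases lt_or_eq_of_le hα with h | h
  · have hA : α * c < α * a := by nlinarith
    have hB : β * c ≤ β * b := by nlinarith
    have hc : α * c + β * c = c := by rw [← add_mul, hs, one_mul]
    linarith
  · have hβ1 : β = 1 := by linarith
    rw [← h, hβ1]; linarith

/-! ### Basic support function lemmas -/

lemma inner_cont (x : E) : Continuous fun y : E => (inner ℝ x y : ℝ) :=
  continuous_const.inner continuous_id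

lemma suppBdd {K : Set E} (hKc : IsCompact K) (x : E) :
    BddAbove ((fun y => (inner ℝ x y : ℝ)) '' K) :=
  (hKc.image (inner_cont x)).bddAbove

lemma le_supp {K : Set E} (hKc : IsCompact K) (x : E) {y : E} (hy : y ∈ K) :
    (inner ℝ x y : ℝ) ≤ supp K x :=
  le_csSup (suppBdd hKc x) ⟨y, hy, rfl⟩

lemma supp_le {K : Set E} (hne : K.Nonempty) {x : E} {c : ℝ}
    (h : ∀ y ∈ K, (inner ℝ x y : ℝ) ≤ c) : supp K x ≤ c :=
  csSup_le (hne.image _) (by rintro r ⟨y, hy, rfl⟩; exact h y hy)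

lemma supp_attain {K : Set E} (hKc : IsCompact K) (hne : K.Nonempty) (x : E) :
    ∃ y ∈ K, supp K x = (inner ℝ x y : ℝ) := by
  have h := (hKc.image (inner_cont x)).sSup_mem (hne.image _)
  obtain ⟨y, hy, hxy⟩ := h
  exact ⟨y, hy, hxy.symm⟩

lemma supp_nonneg {K : Set E} (hKc : IsCompact K) (h0 : (0 : E) ∈ K) (x : E) :
    0 ≤ supp K x := by
  have h := le_supp hKc x h0
  rwa [inner_zero_right] at h

lemma supp_zero {K : Set E} (hne : K.Nonempty) : supp K (0 : E) = 0 := by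
  apply le_antisymm
  · exact supp_le hne (fun y hy => le_of_eq (inner_zero_left y))
  · obtain ⟨y, hy⟩ := hne
    have hb : BddAbove ((fun y => (inner ℝ (0:E) y : ℝ)) '' K) := by
      refine ⟨0, ?_⟩
      rintro r ⟨z, hz, rfl⟩
      exact le_of_eq (inner_zero_left z)
    have h : (inner ℝ (0:E) y : ℝ) ≤ supp K 0 := le_csSup hb ⟨y, hy, rfl⟩
    rw [inner_zero_left] at h
    exact h

lemma supp_smul {K : Set E} (hKc : IsCompact K) (hne : K.Nonempty) {c : ℝ} (hc : 0 ≤ c)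
    (x : E) : supp K (c • x) = c * supp K x := by
  apply le_antisymm
  · apply supp_le hne
    intro y hy
    rw [real_inner_smul_left]
    exact mul_le_mul_of_nonneg_left (le_supp hKc x hy) hc
  · obtain ⟨y, hy, hEq⟩ := supp_attain hKc hne x
    rw [hEq, ← real_inner_smul_left]
    exact le_supp hKc _ hy

lemma supp_add_le {K : Set E} (hKc : IsCompact K) (hne : K.Nonempty) (a b : E) :
    supp K (a + b) ≤ supp K a + supp K b := by
  apply supp_le hne
  intro y hy
  rw [inner_add_left]
  exact add_le_add (le_supp hKc a hy) (le_supp hKc b hy)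

lemma supp_continuous {K : Set E} (hKc : IsCompact K) (hne : K.Nonempty) :
    Continuous (supp K) := by
  obtain ⟨C, hC⟩ := hKc.isBounded.exists_norm_le
  set C' := max C 0 with hC'
  have hC'0 : 0 ≤ C' := le_max_right _ _
  have key : ∀ a b : E, supp K a - supp K b ≤ C' * ‖a - b‖ := by
    intro a b
    have : supp K a ≤ supp K b + C' * ‖a - b‖ := by
      apply supp_le hne
      intro y hy
      have h1 : (inner ℝ (a - b) y : ℝ) ≤ ‖a - b‖ * ‖y‖ := real_inner_le_norm _ _
      have h2 : ‖y‖ ≤ C' := le_trans (hC y hy) (le_max_left _ _)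
      have h3 : (inner ℝ a y : ℝ) = inner ℝ b y + inner ℝ (a - b) y := by
        rw [inner_sub_left]; ring
      have h4 : ‖a - b‖ * ‖y‖ ≤ C' * ‖a - b‖ := by
        rw [mul_comm]
        exact mul_le_mul_of_nonneg_right h2 (norm_nonneg _)
      have := le_supp hKc b hy
      linarith
    linarith
  have : LipschitzWith (Real.toNNReal C') (supp K) := by
    apply LipschitzWith.of_dist_le_mul
    intro a b
    rw [Real.dist_eq, Real.coe_toNNReal _ hC'0]
    rw [abs_sub_le_iff]
    constructor
    · have := key a b; rwa [← dist_eq_norm] at this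
    · have := key b a; rw [← dist_eq_norm] at this; rwa [dist_comm] at this
  exact this.continuous

/-! ### Basic radial function lemmas -/

lemma radial_set_nonempty {K : Set E} (hK0 : (0 : E) ∈ interior K) {u : E} (hu : ‖u‖ = 1) :
    ∃ r : ℝ, 0 < r ∧ r • u ∈ K := by
  obtain ⟨ε, hε, hball⟩ := Metric.mem_nhds_iff.1 (mem_interior_iff_mem_nhds.1 hK0)
  refine ⟨ε / 2, by positivity, ?_⟩
  apply hball
  rw [Metric.mem_ball, dist_zero_right, norm_smul, hu]
  rw [mul_one, Real.norm_eq_abs, abs_of_pos (by positivity)]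
  linarith

lemma radial_bddAbove {K : Set E} (hKc : IsCompact K) {u : E} (hu : ‖u‖ = 1) :
    BddAbove {r : ℝ | 0 < r ∧ r • u ∈ K} := by
  obtain ⟨C, hC⟩ := hKc.isBounded.exists_norm_le
  refine ⟨C, ?_⟩
  rintro r ⟨hr, hrK⟩
  have := hC _ hrK
  rw [norm_smul, hu, mul_one, Real.norm_eq_abs, abs_of_pos hr] at this
  exact this

lemma radial_pos {K : Set E} (hKc : IsCompact K) (hK0 : (0 : E) ∈ interior K)
    {u : E} (hu : ‖u‖ = 1) : 0 < radial K u := by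
  obtain ⟨r, hr, hrK⟩ := radial_set_nonempty hK0 hu
  exact lt_of_lt_of_le hr (le_csSup (radial_bddAbove hKc hu) ⟨hr, hrK⟩)

lemma radial_ge_of_mem {K : Set E} (hKc : IsCompact K) {u : E} (hu : ‖u‖ = 1)
    {r : ℝ} (hr : 0 < r) (hrK : r • u ∈ K) : r ≤ radial K u :=
  le_csSup (radial_bddAbove hKc hu) ⟨hr, hrK⟩

lemma radial_smul_mem {K : Set E} (hKc : IsCompact K) (hK0 : (0 : E) ∈ interior K)
    {u : E} (hu : ‖u‖ = 1) : radial K u • u ∈ K := by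
  set S := {r : ℝ | 0 < r ∧ r • u ∈ K} with hS
  have hSne : S.Nonempty := radial_set_nonempty hK0 hu
  have hSbdd : BddAbove S := radial_bddAbove hKc hu
  have hmem : sSup S ∈ closure S := csSup_mem_closure hSne hSbdd
  have hCc : IsClosed {r : ℝ | r • u ∈ K} :=
    hKc.isClosed.preimage (continuous_id.smul continuous_const)
  have hsub : closure S ⊆ {r : ℝ | r • u ∈ K} :=
    closure_minimal (fun r hr => hr.2) hCc
  exact hsub hmem

lemma smul_mem_of_le_radial {K : Set E} (hKc : IsCompact K) (hKv : Convex ℝ K)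
    (hK0 : (0 : E) ∈ interior K) {u : E} (hu : ‖u‖ = 1) {r : ℝ} (hr : 0 < r)
    (hle : r ≤ radial K u) : r • u ∈ K := by
  rcases eq_or_lt_of_le hle with h | h
  · rw [h]; exact radial_smul_mem hKc hK0 hu
  · obtain ⟨s, ⟨hs0, hsK⟩, hrs⟩ :=
      exists_lt_of_lt_csSup (radial_set_nonempty hK0 hu) h
    have h0K : (0 : E) ∈ K := interior_subset hK0
    have hcomb := hKv h0K hsK (a := 1 - r / s) (b := r / s)
      (by rw [sub_nonneg]; exact div_le_one_of_le₀ hrs.le hs0.le)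
      (by positivity) (by ring)
    rw [smul_zero, zero_add, smul_smul, div_mul_cancel₀ _ (ne_of_gt hs0)] at hcomb
    exact hcomb

lemma mem_iff_le_radial {K : Set E} (hKc : IsCompact K) (hKv : Convex ℝ K)
    (hK0 : (0 : E) ∈ interior K) {u : E} (hu : ‖u‖ = 1) {r : ℝ} (hr : 0 < r) :
    r • u ∈ K ↔ r ≤ radial K u :=
  ⟨radial_ge_of_mem hKc hu hr, smul_mem_of_le_radial hKc hKv hK0 hu hr⟩

/-! ### Unit vector helpers -/

lemma unit_of_ne_zero {x : E} (hx : x ≠ 0) : ‖(‖x‖⁻¹ • x : E)‖ = 1 := by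
  rw [norm_smul, Real.norm_eq_abs, abs_of_nonneg (inv_nonneg.2 (norm_nonneg x))]
  exact inv_mul_cancel₀ (norm_ne_zero_iff.2 hx)

lemma smul_unit_eq {x : E} (hx : x ≠ 0) : ‖x‖ • (‖x‖⁻¹ • x : E) = x := by
  rw [smul_smul, mul_inv_cancel₀ (norm_ne_zero_iff.2 hx), one_smul]

/-! ### From radial pairs to set equalities -/

lemma setEq_of_radial_pairs {K L : Set E}
    (hKc : IsCompact K) (hKv : Convex ℝ K) (hK0 : (0 : E) ∈ interior K)
    (hLc : IsCompact L) (hLv : Convex ℝ L) (hL0 : (0 : E) ∈ interior L)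
    (hrad : ∀ ξ : E, ‖ξ‖ = 1 →
      ({radial K ξ, radial K (-ξ)} : Set ℝ) = {radial L ξ, radial L (-ξ)}) :
    K ∪ -K = L ∪ -L ∧ K ∩ -K = L ∩ -L := by
  have main : ∀ x : E, x ≠ 0 →
      ((x ∈ K ∪ -K ↔ x ∈ L ∪ -L) ∧ (x ∈ K ∩ -K ↔ x ∈ L ∩ -L)) := by
    intro x hx
    set u : E := ‖x‖⁻¹ • x with hu_def
    have hu : ‖u‖ = 1 := unit_of_ne_zero hx
    have hnu : ‖-u‖ = 1 := by rw [norm_neg]; exact hu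
    have hxu : x = ‖x‖ • u := (smul_unit_eq hx).symm
    have hr : (0:ℝ) < ‖x‖ := norm_pos_iff.2 hx
    have hmemK : x ∈ K ↔ ‖x‖ ≤ radial K u := by
      have h := mem_iff_le_radial hKc hKv hK0 hu hr
      rwa [← hxu] at h
    have hmemnK : x ∈ -K ↔ ‖x‖ ≤ radial K (-u) := by
      rw [Set.mem_neg]
      have : -x = ‖x‖ • (-u) := by rw [smul_neg, ← hxu]
      rw [this]
      exact mem_iff_le_radial hKc hKv hK0 hnu hr
    have hmemL : x ∈ L ↔ ‖x‖ ≤ radial L u := by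
      have h := mem_iff_le_radial hLc hLv hL0 hu hr
      rwa [← hxu] at h
    have hmemnL : x ∈ -L ↔ ‖x‖ ≤ radial L (-u) := by
      rw [Set.mem_neg]
      have : -x = ‖x‖ • (-u) := by rw [smul_neg, ← hxu]
      rw [this]
      exact mem_iff_le_radial hLc hLv hL0 hnu hr
    obtain ⟨hmin, hmax⟩ := minmax_of_pair (hrad u hu)
    constructor
    · rw [Set.mem_union, Set.mem_union, hmemK, hmemnK, hmemL, hmemnL,
        ← le_max_iff, ← le_max_iff, hmax]
    · rw [Set.mem_inter_iff, Set.mem_inter_iff, hmemK, hmemnK, hmemL, hmemnL,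
        ← le_min_iff, ← le_min_iff, hmin]
  have h0K : (0:E) ∈ K := interior_subset hK0
  have h0L : (0:E) ∈ L := interior_subset hL0
  constructor
  · ext x
    by_cases hx : x = 0
    · subst hx; simp [h0K, h0L]
    · exact (main x hx).1
  · ext x
    by_cases hx : x = 0
    · subst hx
      constructor
      · intro _; exact ⟨h0L, by rw [Set.mem_neg, neg_zero]; exact h0L⟩
      · intro _; exact ⟨h0K, by rw [Set.mem_neg, neg_zero]; exact h0K⟩
    · exact (main x hx).2

/-! ### Support pairs from set equalities : max part -/

lemma supp_le_max {K L : Set E}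
    (hLc : IsCompact L) (hL0 : (0 : E) ∈ interior L)
    (hU : K ∪ -K = L ∪ -L) (hKsub : K ⊆ K ∪ -K) (hne : K.Nonempty) (ξ : E) :
    supp K ξ ≤ max (supp L ξ) (supp L (-ξ)) := by
  apply supp_le hne
  intro y hy
  have hyU : y ∈ L ∪ -L := by rw [← hU]; exact hKsub hy
  rcases hyU with hyL | hyL
  · exact le_max_of_le_left (le_supp hLc ξ hyL)
  · rw [Set.mem_neg] at hyL
    have : (inner ℝ ξ y : ℝ) = inner ℝ (-ξ) (-y) := (inner_neg_neg ξ y).symm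
    rw [this]
    exact le_max_of_le_right (le_supp hLc (-ξ) hyL)

lemma max_supp_eq {K L : Set E}
    (hKc : IsCompact K) (hK0 : (0 : E) ∈ interior K)
    (hLc : IsCompact L) (hL0 : (0 : E) ∈ interior L)
    (hU : K ∪ -K = L ∪ -L) (ξ : E) :
    max (supp K ξ) (supp K (-ξ)) = max (supp L ξ) (supp L (-ξ)) := by
  have hKne : K.Nonempty := ⟨0, interior_subset hK0⟩
  have hLne : L.Nonempty := ⟨0, interior_subset hL0⟩
  apply le_antisymm
  · apply max_le
    · exact supp_le_max hLc hL0 hU Set.subset_union_left hKne ξ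
    · have h := supp_le_max hLc hL0 hU Set.subset_union_left hKne (-ξ)
      rw [neg_neg] at h
      exact le_trans h (le_of_eq (max_comm _ _))
  · apply max_le
    · exact supp_le_max hKc hK0 hU.symm Set.subset_union_left hLne ξ
    · have h := supp_le_max hKc hK0 hU.symm Set.subset_union_left hLne (-ξ)
      rw [neg_neg] at h
      exact le_trans h (le_of_eq (max_comm _ _))

/-! ### Support pairs from set equalities : min part (the key geometric lemma) -/

lemma min_supp_aux {K L : Set E}
    (hKc : IsCompact K) (hKv : Convex ℝ K) (hK0 : (0 : E) ∈ interior K)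
    (hLc : IsCompact L) (hLv : Convex ℝ L) (hL0 : (0 : E) ∈ interior L)
    (hU : K ∪ -K = L ∪ -L) (hI : K ∩ -K = L ∩ -L)
    {ξ : E} (h1 : supp K (-ξ) < supp L ξ) (h2 : supp K (-ξ) < supp L (-ξ)) :
    False := by
  have hLne : L.Nonempty := ⟨0, interior_subset hL0⟩
  obtain ⟨q, hqL, hq⟩ := supp_attain hLc hLne (-ξ)
  obtain ⟨r', hr'L, hr'⟩ := supp_attain hLc hLne ξ
  -- -q ∈ K
  have hnqU : -q ∈ K ∪ -K := by
    rw [hU]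
    right
    rw [Set.mem_neg, neg_neg]
    exact hqL
  have hnqK : -q ∈ K := by
    rcases hnqU with h | h
    · exact h
    · exfalso
      rw [Set.mem_neg, neg_neg] at h
      have := le_supp hKc (-ξ) h
      rw [← hq] at this
      linarith
  -- r' ∈ K
  have hr'U : r' ∈ K ∪ -K := by rw [hU]; left; exact hr'L
  have hr'K : r' ∈ K := by
    rcases hr'U with h | h
    · exact h
    · exfalso
      rw [Set.mem_neg] at h
      have := le_supp hKc (-ξ) h
      rw [inner_neg_neg] at this
      rw [← hr'] at this
      linarith
  -- the segment
  set seg := segment ℝ r' (-q) with hseg_def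
  have hsegK : seg ⊆ K := hKv.segment_subset hr'K hnqK
  have hsegU : seg ⊆ L ∪ -L := fun z hz => by
    rw [← hU]; left; exact hsegK hz
  -- main dichotomy
  have hz : ∃ z ∈ seg, z ∈ L ∩ -L := by
    by_contra hcon
    push_neg at hcon
    have hopen1 : IsOpen (Lᶜ) := hLc.isClosed.isOpen_compl
    have hopen2 : IsOpen ((-L)ᶜ) := (hLc.neg.isClosed).isOpen_compl
    have hcover : seg ⊆ Lᶜ ∪ (-L)ᶜ := by
      intro z hzseg
      rcases hsegU hzseg with h | h
      · right
        intro hzn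
        exact hcon z hzseg ⟨h, hzn⟩
      · left
        intro hzL
        exact hcon z hzseg ⟨hzL, h⟩
    have hne1 : (seg ∩ Lᶜ).Nonempty := by
      refine ⟨-q, right_mem_segment ℝ r' (-q), ?_⟩
      intro hnqL
      refine hcon (-q) (right_mem_segment ℝ r' (-q)) ⟨hnqL, ?_⟩
      rw [Set.mem_neg, neg_neg]
      exact hqL
    have hne2 : (seg ∩ (-L)ᶜ).Nonempty := by
      refine ⟨r', left_mem_segment ℝ r' (-q), ?_⟩
      intro hr'nL
      exact hcon r' (left_mem_segment ℝ r' (-q)) ⟨hr'L, hr'nL⟩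
    obtain ⟨w, hwseg, hw1, hw2⟩ :=
      (convex_segment r' (-q)).isPreconnected _ _ hopen1 hopen2 hcover hne1 hne2
    rcases hsegU hwseg with h | h
    · exact hw1 h
    · exact hw2 h
  obtain ⟨z, hzseg, hzLnL⟩ := hz
  -- z ∈ K ∩ -K, so ⟨ξ, z⟩ ≤ supp K (-ξ)
  have hzKnK : z ∈ K ∩ -K := by rw [hI]; exact hzLnL
  have hznK : -z ∈ K := by
    have := hzKnK.2
    rwa [Set.mem_neg] at this
  have hzbound : (inner ℝ ξ z : ℝ) ≤ supp K (-ξ) := by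
    have h := le_supp hKc (-ξ) hznK
    rwa [inner_neg_neg] at h
  -- but ⟨ξ, z⟩ is a convex combination of supp L ξ and supp L (-ξ)
  obtain ⟨α, β, hα, hβ, hαβ, hzEq⟩ := hzseg
  have hinner : (inner ℝ ξ z : ℝ) = α * supp L ξ + β * supp L (-ξ) := by
    rw [← hzEq, inner_add_right, real_inner_smul_right, real_inner_smul_right]
    congr 2
    · exact hr'.symm
    · rw [inner_neg_right, ← inner_neg_left]
      exact hq.symm
  have := combo_lt' hα hβ hαβ h1 h2
  rw [← hinner] at this
  linarith

lemma min_supp_le {K L : Set E}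
    (hKc : IsCompact K) (hKv : Convex ℝ K) (hK0 : (0 : E) ∈ interior K)
    (hLc : IsCompact L) (hLv : Convex ℝ L) (hL0 : (0 : E) ∈ interior L)
    (hU : K ∪ -K = L ∪ -L) (hI : K ∩ -K = L ∩ -L) (ξ : E) :
    min (supp L ξ) (supp L (-ξ)) ≤ min (supp K ξ) (supp K (-ξ)) := by
  by_contra hcon
  push_neg at hcon
  rcases min_cases (supp K ξ) (supp K (-ξ)) with ⟨hmin, _⟩ | ⟨hmin, _⟩
  · -- min = supp K ξ ; apply aux with -ξ
    rw [hmin] at hcon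
    refine min_supp_aux hKc hKv hK0 hLc hLv hL0 hU hI
      (ξ := -ξ) ?_ ?_
    · rw [neg_neg]
      exact lt_of_lt_of_le hcon (min_le_right _ _)
    · rw [neg_neg]
      exact lt_of_lt_of_le hcon (min_le_left _ _)
  · rw [hmin] at hcon
    refine min_supp_aux hKc hKv hK0 hLc hLv hL0 hU hI (ξ := ξ) ?_ ?_
    · exact lt_of_lt_of_le hcon (min_le_left _ _)
    · exact lt_of_lt_of_le hcon (min_le_right _ _)

lemma min_supp_eq {K L : Set E}
    (hKc : IsCompact K) (hKv : Convex ℝ K) (hK0 : (0 : E) ∈ interior K)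
    (hLc : IsCompact L) (hLv : Convex ℝ L) (hL0 : (0 : E) ∈ interior L)
    (hU : K ∪ -K = L ∪ -L) (hI : K ∩ -K = L ∩ -L) (ξ : E) :
    min (supp K ξ) (supp K (-ξ)) = min (supp L ξ) (supp L (-ξ)) :=
  le_antisymm
    (min_supp_le hLc hLv hL0 hKc hKv hK0 hU.symm hI.symm ξ)
    (min_supp_le hKc hKv hK0 hLc hLv hL0 hU hI ξ)

/-! ### From support pairs at unit vectors to support pairs at all nonzero vectors -/

lemma pair_all {K L : Set E}
    (hKc : IsCompact K) (hK0 : (0 : E) ∈ interior K)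
    (hLc : IsCompact L) (hL0 : (0 : E) ∈ interior L)
    (hsupp : ∀ ξ : E, ‖ξ‖ = 1 →
      ({supp K ξ, supp K (-ξ)} : Set ℝ) = {supp L ξ, supp L (-ξ)})
    {η : E} (hη : η ≠ 0) :
    ({supp K η, supp K (-η)} : Set ℝ) = {supp L η, supp L (-η)} := by
  have hKne : K.Nonempty := ⟨0, interior_subset hK0⟩
  have hLne : L.Nonempty := ⟨0, interior_subset hL0⟩
  set u : E := ‖η‖⁻¹ • η with hu_def
  have hu : ‖u‖ = 1 := unit_of_ne_zero hη
  have hηu : η = ‖η‖ • u := (smul_unit_eq hη).symm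
  have hnηu : -η = ‖η‖ • (-u) := by rw [smul_neg, ← hηu]
  have e1 : supp K η = ‖η‖ * supp K u := by
    have h := supp_smul hKc hKne (norm_nonneg η) u
    rwa [← hηu] at h
  have e2 : supp K (-η) = ‖η‖ * supp K (-u) := by
    have h := supp_smul hKc hKne (norm_nonneg η) (-u)
    rwa [← hnηu] at h
  have e3 : supp L η = ‖η‖ * supp L u := by
    have h := supp_smul hLc hLne (norm_nonneg η) u
    rwa [← hηu] at h
  have e4 : supp L (-η) = ‖η‖ * supp L (-u) := by
    have h := supp_smul hLc hLne (norm_nonneg η) (-u)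
    rwa [← hnηu] at h
  rcases pair_cases (hsupp u hu) with ⟨g1, g2⟩ | ⟨g1, g2⟩
  · exact Set.pair_eq_pair_iff.2 (Or.inl ⟨by rw [e1, e3, g1], by rw [e2, e4, g2]⟩)
  · exact Set.pair_eq_pair_iff.2 (Or.inr ⟨by rw [e1, e4, g1], by rw [e2, e3, g2]⟩)

/-- From a separating functional on `L` for a point of `K`, deduce
`supp K (-v) = supp L v < ⟪v, x⟫`. -/
lemma swap_of_separation {K L : Set E}
    (hKc : IsCompact K) (hK0 : (0 : E) ∈ interior K)
    (hLc : IsCompact L) (hL0 : (0 : E) ∈ interior L)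
    (hpair : ∀ η : E, η ≠ 0 →
      ({supp K η, supp K (-η)} : Set ℝ) = {supp L η, supp L (-η)})
    {x : E} (hxK : x ∈ K) {v : E} (hsep : supp L v < (inner ℝ v x : ℝ)) :
    supp K (-v) < (inner ℝ v x : ℝ) := by
  have hLne : L.Nonempty := ⟨0, interior_subset hL0⟩
  have hv : v ≠ 0 := by
    intro h
    subst h
    rw [inner_zero_left] at hsep
    have := supp_nonneg hLc (interior_subset hL0) (0 : E)
    rw [supp_zero hLne] at hsep
    linarith
  have hxv : (inner ℝ v x : ℝ) ≤ supp K v := le_supp hKc v hxK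
  rcases pair_cases (hpair v hv) with ⟨g1, g2⟩ | ⟨g1, g2⟩
  · exfalso
    rw [g1] at hxv
    linarith
  · rw [g2]
    linarith

/-! ### K ∩ -K = L ∩ -L from support pairs -/

lemma inter_subset_of_supp_pairs {K L : Set E}
    (hKc : IsCompact K) (hK0 : (0 : E) ∈ interior K)
    (hLc : IsCompact L) (hLv : Convex ℝ L) (hL0 : (0 : E) ∈ interior L)
    (hpair : ∀ η : E, η ≠ 0 →
      ({supp K η, supp K (-η)} : Set ℝ) = {supp L η, supp L (-η)}) :
    K ∩ -K ⊆ L := by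
  intro x hx
  by_contra hxL
  have hLne : L.Nonempty := ⟨0, interior_subset hL0⟩
  obtain ⟨f, c, hfc, hcx⟩ :=
    geometric_hahn_banach_closed_point hLv hLc.isClosed hxL
  set v : E := (InnerProductSpace.toDual ℝ _).symm f with hv_def
  have hv : ∀ y : E, (inner ℝ v y : ℝ) = f y := fun y =>
    InnerProductSpace.toDual_symm_apply
  have hsL : supp L v ≤ c := supp_le hLne (fun y hy => by rw [hv]; exact (hfc y hy).le)
  have hsep : supp L v < (inner ℝ v x : ℝ) := by
    rw [hv]; exact lt_of_le_of_lt hsL hcx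
  have hswap := swap_of_separation hKc hK0 hLc hL0 hpair hx.1 hsep
  -- but x ∈ -K gives ⟪v, x⟫ = ⟪-v, -x⟫ ≤ supp K (-v)
  have hnx : -x ∈ K := by
    have := hx.2
    rwa [Set.mem_neg] at this
  have := le_supp hKc (-v) hnx
  rw [inner_neg_neg] at this
  linarith

lemma inter_eq_of_supp_pairs {K L : Set E}
    (hKc : IsCompact K) (hKv : Convex ℝ K) (hK0 : (0 : E) ∈ interior K)
    (hLc : IsCompact L) (hLv : Convex ℝ L) (hL0 : (0 : E) ∈ interior L)
    (hpair : ∀ η : E, η ≠ 0 →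
      ({supp K η, supp K (-η)} : Set ℝ) = {supp L η, supp L (-η)}) :
    K ∩ -K = L ∩ -L := by
  have hpair' : ∀ η : E, η ≠ 0 →
      ({supp L η, supp L (-η)} : Set ℝ) = {supp K η, supp K (-η)} :=
    fun η hη => (hpair η hη).symm
  have hKL : K ∩ -K ⊆ L := inter_subset_of_supp_pairs hKc hK0 hLc hLv hL0 hpair
  have hLK : L ∩ -L ⊆ K := inter_subset_of_supp_pairs hLc hL0 hKc hKv hK0 hpair'
  apply Set.Subset.antisymm
  · intro x hx
    have hnx : -x ∈ K ∩ -K :=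
      ⟨Set.mem_neg.1 hx.2, by rw [Set.mem_neg, neg_neg]; exact hx.1⟩
    exact ⟨hKL hx, Set.mem_neg.2 (hKL hnx)⟩
  · intro x hx
    have hnx : -x ∈ L ∩ -L :=
      ⟨Set.mem_neg.1 hx.2, by rw [Set.mem_neg, neg_neg]; exact hx.1⟩
    exact ⟨hLK hx, Set.mem_neg.2 (hLK hnx)⟩

/-! ### The key lemma for the converse direction -/

lemma max_radial_aux {K L : Set E}
    (hKc : IsCompact K) (hKv : Convex ℝ K) (hK0 : (0 : E) ∈ interior K)
    (hLc : IsCompact L) (hLv : Convex ℝ L) (hL0 : (0 : E) ∈ interior L)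
    (hpair : ∀ η : E, η ≠ 0 →
      ({supp K η, supp K (-η)} : Set ℝ) = {supp L η, supp L (-η)})
    {u : E} (hu : ‖u‖ = 1)
    (h1 : radial L u < radial K u) (h2 : radial L (-u) < radial K u) : False := by
  have hKne : K.Nonempty := ⟨0, interior_subset hK0⟩
  have hLne : L.Nonempty := ⟨0, interior_subset hL0⟩
  have hnu : ‖-u‖ = 1 := by rw [norm_neg]; exact hu
  set ρ : ℝ := radial K u with hρ_def
  have hρ : 0 < ρ := radial_pos hKc hK0 hu
  set x : E := ρ • u with hx_def
  have hxK : x ∈ K := radial_smul_mem hKc hK0 hu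
  have hxL : x ∉ L := fun h => absurd (radial_ge_of_mem hLc hu hρ h) (not_le.2 h1)
  have hxnL : x ∉ -L := by
    intro h
    rw [Set.mem_neg] at h
    have hx' : -x = ρ • (-u) := by rw [hx_def, smul_neg]
    rw [hx'] at h
    exact absurd (radial_ge_of_mem hLc hnu hρ h) (not_le.2 h2)
  -- separation of x from L
  obtain ⟨f1, c1, hf1, hc1⟩ := geometric_hahn_banach_closed_point hLv hLc.isClosed hxL
  set v1 : E := (InnerProductSpace.toDual ℝ _).symm f1 with hv1_def
  have hv1 : ∀ y : E, (inner ℝ v1 y : ℝ) = f1 y := fun y =>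
    InnerProductSpace.toDual_symm_apply
  have hsep1 : supp L v1 < (inner ℝ v1 x : ℝ) := by
    have hb : supp L v1 ≤ c1 :=
      supp_le hLne (fun y hy => by rw [hv1]; exact (hf1 y hy).le)
    rw [hv1]; exact lt_of_le_of_lt hb hc1
  -- separation of x from -L
  obtain ⟨f2, c2, hf2, hc2⟩ :=
    geometric_hahn_banach_closed_point hLv.neg hLc.neg.isClosed hxnL
  set v2 : E := (InnerProductSpace.toDual ℝ _).symm f2 with hv2_def
  have hv2 : ∀ y : E, (inner ℝ v2 y : ℝ) = f2 y := fun y =>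
    InnerProductSpace.toDual_symm_apply
  have hsep2 : supp L (-v2) < (inner ℝ v2 x : ℝ) := by
    have hb : supp L (-v2) ≤ c2 := by
      apply supp_le hLne
      intro y hy
      have hyn : -y ∈ -L := Set.neg_mem_neg.2 hy
      have : (inner ℝ (-v2) y : ℝ) = inner ℝ v2 (-y) := by
        rw [inner_neg_left, inner_neg_right]
      rw [this, hv2]
      exact (hf2 (-y) hyn).le
    rw [hv2]; exact lt_of_le_of_lt hb hc2
  -- the swapped inequalities for K
  have hswap1 : supp K (-v1) < (inner ℝ v1 x : ℝ) :=
    swap_of_separation hKc hK0 hLc hL0 hpair hxK hsep1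
  have hv2ne : v2 ≠ 0 := by
    intro h
    rw [h, inner_zero_left, neg_zero, supp_zero hLne] at hsep2
    exact lt_irrefl 0 hsep2
  have hswap2 : supp K (-v2) < (inner ℝ v2 x : ℝ) := by
    have hxv2 : (inner ℝ v2 x : ℝ) ≤ supp K v2 := le_supp hKc v2 hxK
    rcases pair_cases (hpair v2 hv2ne) with ⟨g1, g2⟩ | ⟨g1, g2⟩
    · rw [g2]; linarith
    · exfalso; rw [g1] at hxv2; linarith
  -- the path of directions
  set η : ℝ → E := fun t => (1 - t) • v1 + t • v2 with hη_def
  have hη0 : η 0 = v1 := by simp [hη_def]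
  have hη1 : η 1 = v2 := by simp [hη_def]
  have hηcont : Continuous η := by
    exact ((continuous_const.sub continuous_id).smul continuous_const).add
      (continuous_id.smul continuous_const)
  have hkey : ∀ t ∈ Icc (0:ℝ) 1, supp K (-(η t)) < (inner ℝ (η t) x : ℝ) := by
    intro t ht
    have hneg : -(η t) = (1 - t) • (-v1) + t • (-v2) := by
      rw [hη_def]; simp only [smul_neg]; rw [neg_add]
    have hsub : supp K (-(η t)) ≤ (1 - t) * supp K (-v1) + t * supp K (-v2) := by
      rw [hneg]
      refine le_trans (supp_add_le hKc hKne _ _) ?_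
      rw [supp_smul hKc hKne (by linarith [ht.2] : (0:ℝ) ≤ 1 - t) (-v1),
        supp_smul hKc hKne ht.1 (-v2)]
    have hcomb := combo_lt ht.1 ht.2 hswap1 hswap2
    have hlin : (inner ℝ (η t) x : ℝ) = (1 - t) * inner ℝ v1 x + t * inner ℝ v2 x := by
      rw [hη_def]
      simp only []
      rw [inner_add_left, real_inner_smul_left, real_inner_smul_left]
    rw [hlin]
    linarith
  have hηne : ∀ t ∈ Icc (0:ℝ) 1, η t ≠ 0 := by
    intro t ht h
    have hk := hkey t ht
    rw [h, neg_zero, supp_zero hKne, inner_zero_left] at hk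
    exact lt_irrefl 0 hk
  -- the two open sets
  set U1 : Set ℝ := {t : ℝ | supp L (η t) < (inner ℝ (η t) x : ℝ)} with hU1_def
  set U2 : Set ℝ := {t : ℝ | supp L (-(η t)) < (inner ℝ (η t) x : ℝ)} with hU2_def
  have hdisj : ∀ t ∈ Icc (0:ℝ) 1, ¬(t ∈ U1 ∧ t ∈ U2) := by
    rintro t ht ⟨hU1t, hU2t⟩
    simp only [hU1_def, Set.mem_setOf_eq] at hU1t
    simp only [hU2_def, Set.mem_setOf_eq] at hU2t
    have hxvt : (inner ℝ (η t) x : ℝ) ≤ supp K (η t) := le_supp hKc _ hxK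
    rcases pair_cases (hpair (η t) (hηne t ht)) with ⟨g1, _⟩ | ⟨g1, _⟩
    · rw [g1] at hxvt; linarith
    · rw [g1] at hxvt; linarith
  have hcover : Icc (0:ℝ) 1 ⊆ U1 ∪ U2 := by
    intro t ht
    by_contra hcon
    rw [Set.mem_union] at hcon
    push_neg at hcon
    obtain ⟨hc1', hc2'⟩ := hcon
    simp only [hU1_def, Set.mem_setOf_eq, not_lt] at hc1'
    simp only [hU2_def, Set.mem_setOf_eq, not_lt] at hc2'
    have hk := hkey t ht
    rcases pair_cases (hpair (η t) (hηne t ht)) with ⟨_, g2⟩ | ⟨_, g2⟩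
    · rw [g2] at hk; linarith
    · rw [g2] at hk; linarith
  have hinnercont : Continuous fun t : ℝ => (inner ℝ (η t) x : ℝ) :=
    hηcont.inner continuous_const
  have hopen1 : IsOpen U1 :=
    isOpen_lt ((supp_continuous hLc hLne).comp hηcont) hinnercont
  have hopen2 : IsOpen U2 :=
    isOpen_lt ((supp_continuous hLc hLne).comp hηcont.neg) hinnercont
  have hmem0 : (0:ℝ) ∈ Icc (0:ℝ) 1 ∩ U1 := by
    refine ⟨⟨le_refl 0, zero_le_one⟩, ?_⟩
    simp only [hU1_def, Set.mem_setOf_eq, hη0]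
    exact hsep1
  have hmem1 : (1:ℝ) ∈ Icc (0:ℝ) 1 ∩ U2 := by
    refine ⟨⟨zero_le_one, le_refl 1⟩, ?_⟩
    simp only [hU2_def, Set.mem_setOf_eq, hη1]
    exact hsep2
  obtain ⟨t, htIcc, htU⟩ :=
    isPreconnected_Icc _ _ hopen1 hopen2 hcover ⟨0, hmem0⟩ ⟨1, hmem1⟩
  exact hdisj t htIcc ⟨htU.1, htU.2⟩

lemma max_radial_le {K L : Set E}
    (hKc : IsCompact K) (hKv : Convex ℝ K) (hK0 : (0 : E) ∈ interior K)
    (hLc : IsCompact L) (hLv : Convex ℝ L) (hL0 : (0 : E) ∈ interior L)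
    (hpair : ∀ η : E, η ≠ 0 →
      ({supp K η, supp K (-η)} : Set ℝ) = {supp L η, supp L (-η)})
    {u : E} (hu : ‖u‖ = 1) :
    max (radial K u) (radial K (-u)) ≤ max (radial L u) (radial L (-u)) := by
  by_contra hcon
  push_neg at hcon
  have hnu : ‖-u‖ = 1 := by rw [norm_neg]; exact hu
  rcases max_cases (radial K u) (radial K (-u)) with ⟨hmax, _⟩ | ⟨hmax, _⟩
  · rw [hmax] at hcon
    exact max_radial_aux hKc hKv hK0 hLc hLv hL0 hpair hu
      (lt_of_le_of_lt (le_max_left _ _) hcon)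
      (lt_of_le_of_lt (le_max_right _ _) hcon)
  · rw [hmax] at hcon
    refine max_radial_aux hKc hKv hK0 hLc hLv hL0 hpair hnu ?_ ?_
    · exact lt_of_le_of_lt (le_max_right _ _) hcon
    · rw [neg_neg]
      exact lt_of_le_of_lt (le_max_left _ _) hcon

lemma min_radial_eq {K L : Set E}
    (hKc : IsCompact K) (hKv : Convex ℝ K) (hK0 : (0 : E) ∈ interior K)
    (hLc : IsCompact L) (hLv : Convex ℝ L) (hL0 : (0 : E) ∈ interior L)
    (hI : K ∩ -K = L ∩ -L) {u : E} (hu : ‖u‖ = 1) :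
    min (radial K u) (radial K (-u)) = min (radial L u) (radial L (-u)) := by
  have hnu : ‖-u‖ = 1 := by rw [norm_neg]; exact hu
  have side : ∀ (A B : Set E), IsCompact A → Convex ℝ A → (0:E) ∈ interior A →
      IsCompact B → Convex ℝ B → (0:E) ∈ interior B → A ∩ -A = B ∩ -B →
      min (radial A u) (radial A (-u)) ≤ min (radial B u) (radial B (-u)) := by
    intro A B hAc hAv hA0 hBc hBv hB0 hABI
    set m : ℝ := min (radial A u) (radial A (-u)) with hm_def
    have hm : 0 < m :=
      lt_min (radial_pos hAc hA0 hu) (radial_pos hAc hA0 hnu)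
    have hmuA : m • u ∈ A :=
      smul_mem_of_le_radial hAc hAv hA0 hu hm (min_le_left _ _)
    have hmunA : m • u ∈ -A := by
      rw [Set.mem_neg, ← smul_neg]
      exact smul_mem_of_le_radial hAc hAv hA0 hnu hm (min_le_right _ _)
    have hmem : m • u ∈ B ∩ -B := by rw [← hABI]; exact ⟨hmuA, hmunA⟩
    have hle1 : m ≤ radial B u := radial_ge_of_mem hBc hu hm hmem.1
    have hle2 : m ≤ radial B (-u) := by
      apply radial_ge_of_mem hBc hnu hm
      rw [smul_neg]
      exact Set.mem_neg.1 hmem.2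
    exact le_min hle1 hle2
  exact le_antisymm
    (side K L hKc hKv hK0 hLc hLv hL0 hI)
    (side L K hLc hLv hL0 hKc hKv hK0 hI.symm)

end RadialSupportAux

theorem radial_pairs_eq_iff_support_pairs_eq {n : ℕ} (K L : Set (EuclideanSpace ℝ (Fin n)))
    (hKc : IsCompact K) (hKv : Convex ℝ K)
    (hK0 : (0 : EuclideanSpace ℝ (Fin n)) ∈ interior K)
    (hLc : IsCompact L) (hLv : Convex ℝ L)
    (hL0 : (0 : EuclideanSpace ℝ (Fin n)) ∈ interior L) :
    (∀ ξ : EuclideanSpace ℝ (Fin n), ‖ξ‖ = 1 →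
        ({radial K ξ, radial K (-ξ)} : Set ℝ) = {radial L ξ, radial L (-ξ)}) ↔
      (∀ ξ : EuclideanSpace ℝ (Fin n), ‖ξ‖ = 1 →
        ({supp K ξ, supp K (-ξ)} : Set ℝ) = {supp L ξ, supp L (-ξ)}) := by
  constructor
  · intro hrad ξ _
    obtain ⟨hU, hI⟩ :=
      RadialSupportAux.setEq_of_radial_pairs hKc hKv hK0 hLc hLv hL0 hrad
    exact RadialSupportAux.pair_of_minmax
      (RadialSupportAux.min_supp_eq hKc hKv hK0 hLc hLv hL0 hU hI ξ)
      (RadialSupportAux.max_supp_eq hKc hK0 hLc hL0 hU ξ)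
  · intro hsupp u hu
    have hpair : ∀ η : EuclideanSpace ℝ (Fin n), η ≠ 0 →
        ({supp K η, supp K (-η)} : Set ℝ) = {supp L η, supp L (-η)} :=
      fun η hη => RadialSupportAux.pair_all hKc hK0 hLc hL0 hsupp hη
    have hpair' : ∀ η : EuclideanSpace ℝ (Fin n), η ≠ 0 →
        ({supp L η, supp L (-η)} : Set ℝ) = {supp K η, supp K (-η)} :=
      fun η hη => (hpair η hη).symm
    have hI := RadialSupportAux.inter_eq_of_supp_pairs hKc hKv hK0 hLc hLv hL0 hpair
    have hmax : max (radial K u) (radial K (-u)) = max (radial L u) (radial L (-u)) :=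
      le_antisymm
        (RadialSupportAux.max_radial_le hKc hKv hK0 hLc hLv hL0 hpair hu)
        (RadialSupportAux.max_radial_le hLc hLv hL0 hKc hKv hK0 hpair' hu)
    exact RadialSupportAux.pair_of_minmax
      (RadialSupportAux.min_radial_eq hKc hKv hK0 hLc hLv hL0 hI hu) hmax
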